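/- arXiv:2003.09681 — 2 statements merged into one kernel-verified Lean document; each statement's English description precedes it below -/
import Mathlib

section
/- Let K ⊆ ℝ^d be a compact set that is pointwise Whitney regular. If (f_n) and (df_n) are sequences of functions on K such that each df_n is a continuous derivative of f_n on K, f_n → f uniformly on K, and df_n → g uniformly on K, then g is a continuous derivative of f on K. Consequently, the jet space J¹(K) = {(f, df) : df is a continuous derivative of f on K}, with norm ‖(f,df)‖ = ‖f‖_K + ‖df‖_K, is a Banach space. -/
open Set Filter Topology MeasureTheory
open scoped NNReal ENNReal

noncomputable section

/-- `df` is a (not necessarily unique) derivative of `f` on the set `K`: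
at every `x ∈ K`, `(f y - f x - ⟪df x, y - x⟫)/‖y - x‖ → 0` as `y → x` within `K`. -/
def IsDerivOn {d : ℕ} (K : Set (EuclideanSpace ℝ (Fin d)))
    (f : EuclideanSpace ℝ (Fin d) → ℝ)
    (df : EuclideanSpace ℝ (Fin d) → EuclideanSpace ℝ (Fin d)) : Prop :=
  ∀ x ∈ K, Filter.Tendsto
    (fun y => (f y - f x - (inner ℝ (df x) (y - x) : ℝ)) / ‖y - x‖)
    (𝓝[K \ {x}] x) (𝓝 0)

/-- `x` and `y` are joined by a rectifiable path inside `S` of length at most `L`. -/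
def RectJoin {d : ℕ} (S : Set (EuclideanSpace ℝ (Fin d)))
    (x y : EuclideanSpace ℝ (Fin d)) (L : ℝ) : Prop :=
  ∃ γ : ℝ → EuclideanSpace ℝ (Fin d), ContinuousOn γ (Icc 0 1) ∧
    MapsTo γ (Icc 0 1) S ∧ γ 0 = x ∧ γ 1 = y ∧
    eVariationOn γ (Icc 0 1) ≤ ENNReal.ofReal L

/-- Pointwise Whitney regularity of a set. -/
def PointwiseWhitneyRegular {d : ℕ} (S : Set (EuclideanSpace ℝ (Fin d))) : Prop :=
  ∀ x ∈ S, ∃ C > (0:ℝ), ∃ V ∈ 𝓝 x, ∀ y ∈ V ∩ S, RectJoin S x y (C * ‖x - y‖)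

lemma IsDerivOn.continuousOn' {d : ℕ} {K : Set (EuclideanSpace ℝ (Fin d))}
    {f : EuclideanSpace ℝ (Fin d) → ℝ} {df : EuclideanSpace ℝ (Fin d) → EuclideanSpace ℝ (Fin d)}
    (h : IsDerivOn K f df) : ContinuousOn f K := by
  intro x hx
  rw [← continuousWithinAt_diff_self]
  have hsub : Tendsto (fun y => y - x) (𝓝[K \ {x}] x) (𝓝 0) := by
    have : Tendsto (fun y : EuclideanSpace ℝ (Fin d) => y - x) (𝓝 x) (𝓝 (x - x)) :=
      (continuous_id.sub continuous_const).tendsto x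
    rw [sub_self] at this
    exact this.mono_left nhdsWithin_le_nhds
  have hnorm : Tendsto (fun y => ‖y - x‖) (𝓝[K \ {x}] x) (𝓝 0) := by
    simpa using hsub.norm
  have hinner : Tendsto (fun y => (inner ℝ (df x) (y - x) : ℝ)) (𝓝[K \ {x}] x) (𝓝 0) := by
    have := Tendsto.inner (𝕜 := ℝ)
      (tendsto_const_nhds : Tendsto (fun _ : EuclideanSpace ℝ (Fin d) => df x) (𝓝[K \ {x}] x) (𝓝 (df x))) hsub
    simpa using this
  have h1 : Tendsto (fun y => (f y - f x - (inner ℝ (df x) (y - x) : ℝ)) / ‖y - x‖ * ‖y - x‖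
      + (inner ℝ (df x) (y - x) : ℝ) + f x) (𝓝[K \ {x}] x) (𝓝 (f x)) := by
    have := (((h x hx).mul hnorm).add hinner).add (tendsto_const_nhds (x := f x))
    simpa using this
  refine (Tendsto.congr' ?_ h1 : ContinuousWithinAt f (K \ {x}) x)
  filter_upwards [self_mem_nhdsWithin] with y hy
  have hyx : y ≠ x := fun h' => hy.2 (by simp [h'])
  have : ‖y - x‖ ≠ 0 := by simp [sub_eq_zero, hyx]
  field_simp
  ring

lemma IsDerivOn.sub' {d : ℕ} {K : Set (EuclideanSpace ℝ (Fin d))}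
    {f1 f2 : EuclideanSpace ℝ (Fin d) → ℝ}
    {g1 g2 : EuclideanSpace ℝ (Fin d) → EuclideanSpace ℝ (Fin d)}
    (h1 : IsDerivOn K f1 g1) (h2 : IsDerivOn K f2 g2) :
    IsDerivOn K (fun p => f1 p - f2 p) (fun p => g1 p - g2 p) := by
  intro x hx
  have := (h1 x hx).sub (h2 x hx)
  rw [sub_zero] at this
  refine Tendsto.congr (fun y => ?_) this
  rw [← sub_div]
  congr 1
  rw [inner_sub_left]
  ring

lemma path_bound {d : ℕ} {K : Set (EuclideanSpace ℝ (Fin d))}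
    {h : EuclideanSpace ℝ (Fin d) → ℝ} {dh : EuclideanSpace ℝ (Fin d) → EuclideanSpace ℝ (Fin d)}
    (hder : IsDerivOn K h dh) {M : ℝ} (hM : ∀ p ∈ K, ‖dh p‖ ≤ M)
    {γ : ℝ → EuclideanSpace ℝ (Fin d)} (hγc : ContinuousOn γ (Icc 0 1))
    (hγm : MapsTo γ (Icc 0 1) K) {L : ℝ} (hL : 0 ≤ L)
    (hvar : eVariationOn γ (Icc 0 1) ≤ ENNReal.ofReal L) :
    |h (γ 1) - h (γ 0)| ≤ M * L := by
  have hM0 : 0 ≤ M := le_trans (norm_nonneg _) (hM (γ 0) (hγm ⟨le_rfl, zero_le_one⟩))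
  set v : ℝ → ℝ := fun t => (eVariationOn γ (Icc 0 t)).toReal with hv
  have hfin : ∀ t, eVariationOn γ (Icc 0 t) ≠ ⊤ ∨ 1 < t := by
    intro t
    rcases le_or_gt t 1 with ht | ht
    · left
      refine ne_top_of_le_ne_top (by simp) (le_trans (eVariationOn.mono γ ?_) hvar)
      exact Icc_subset_Icc le_rfl ht
    · right; exact ht
  have hfin' : ∀ t ≤ (1:ℝ), eVariationOn γ (Icc 0 t) ≠ ⊤ := by
    intro t ht
    refine ne_top_of_le_ne_top (by simp) (le_trans (eVariationOn.mono γ ?_) hvar)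
    exact Icc_subset_Icc le_rfl ht
  have hvL : ∀ t ≤ (1:ℝ), v t ≤ L := by
    intro t ht
    have h1 : eVariationOn γ (Icc 0 t) ≤ ENNReal.ofReal L :=
      le_trans (eVariationOn.mono γ (Icc_subset_Icc le_rfl ht)) hvar
    calc v t ≤ (ENNReal.ofReal L).toReal := ENNReal.toReal_mono (by simp) h1
    _ = L := ENNReal.toReal_ofReal hL
  have hadd : ∀ s t : ℝ, 0 ≤ s → s ≤ t → t ≤ 1 →
      eVariationOn γ (Icc 0 s) + eVariationOn γ (Icc s t) = eVariationOn γ (Icc 0 t) := by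
    intro s t h0s hst ht1
    have := eVariationOn.Icc_add_Icc γ (s := Icc (0:ℝ) 1) h0s hst ⟨h0s, hst.trans ht1⟩
    rwa [inter_eq_self_of_subset_right (Icc_subset_Icc le_rfl (hst.trans ht1)),
      inter_eq_self_of_subset_right (Icc_subset_Icc h0s ht1),
      inter_eq_self_of_subset_right (Icc_subset_Icc le_rfl ht1)] at this
  have hvmono : ∀ s t : ℝ, 0 ≤ s → s ≤ t → t ≤ 1 → v s ≤ v t := by
    intro s t h0s hst ht1
    exact ENNReal.toReal_mono (hfin' t ht1) (eVariationOn.mono γ (Icc_subset_Icc le_rfl hst))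
  have hdistv : ∀ s t : ℝ, 0 ≤ s → s ≤ t → t ≤ 1 → ‖γ t - γ s‖ ≤ v t - v s := by
    intro s t h0s hst ht1
    have hs1 : s ≤ 1 := hst.trans ht1
    have hmid : eVariationOn γ (Icc s t) ≠ ⊤ := by
      refine ne_top_of_le_ne_top (hfin' t ht1) ?_
      rw [← hadd s t h0s hst ht1]; exact le_add_self
    have hedist : edist (γ s) (γ t) ≤ eVariationOn γ (Icc s t) :=
      eVariationOn.edist_le γ ⟨le_rfl, hst⟩ ⟨hst, le_rfl⟩
    have h1 : dist (γ s) (γ t) ≤ (eVariationOn γ (Icc s t)).toReal := by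
      rw [dist_edist]
      exact ENNReal.toReal_mono hmid hedist
    have h2 : v t = v s + (eVariationOn γ (Icc s t)).toReal := by
      rw [hv]
      simp only
      rw [← ENNReal.toReal_add (hfin' s hs1) hmid, hadd s t h0s hst ht1]
    rw [← dist_eq_norm, dist_comm]
    linarith
  have hv0 : v 0 = 0 := by
    have : eVariationOn γ (Icc (0:ℝ) 0) = 0 := by
      apply eVariationOn.subsingleton
      rw [Icc_self]; exact subsingleton_singleton
    simp [hv, this]
  -- main estimate with ε slack
  have main : ∀ ε > (0:ℝ), |h (γ 1) - h (γ 0)| ≤ (M + ε) * L := by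
    intro ε hε
    have hMε : 0 ≤ M + ε := by linarith
    set S : Set ℝ := {t | t ∈ Icc (0:ℝ) 1 ∧ |h (γ t) - h (γ 0)| ≤ (M + ε) * v t} with hS
    have h0S : 0 ∈ S := by
      constructor
      · exact ⟨le_rfl, zero_le_one⟩
      · simp [hv0]
    have hne : S.Nonempty := ⟨0, h0S⟩
    have hbdd : BddAbove S := ⟨1, fun t ht => ht.1.2⟩
    set s₀ := sSup S with hs₀
    have hs₀mem : s₀ ∈ Icc (0:ℝ) 1 :=
      ⟨le_csSup hbdd h0S, csSup_le hne fun t ht => ht.1.2⟩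
    have hcont : ContinuousOn (fun t => h (γ t)) (Icc 0 1) :=
      (hder.continuousOn').comp hγc hγm
    have hs₀S : s₀ ∈ S := by
      refine ⟨hs₀mem, le_of_forall_pos_le_add fun η hη => ?_⟩
      obtain ⟨δ, hδ, hδ'⟩ := Metric.continuousWithinAt_iff.1 (hcont s₀ hs₀mem) η hη
      obtain ⟨t, htS, htgt⟩ := exists_lt_of_lt_csSup hne (show s₀ - δ < s₀ by linarith)
      have hts₀ : t ≤ s₀ := le_csSup hbdd htS
      have hdist : dist t s₀ < δ := by
        rw [Real.dist_eq, abs_of_nonpos (by linarith)]; linarith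
      have h1 : |h (γ s₀) - h (γ t)| < η := by
        have := hδ' htS.1 hdist
        rwa [Real.dist_eq, abs_sub_comm] at this
      have h2 : |h (γ t) - h (γ 0)| ≤ (M + ε) * v t := htS.2
      have h3 : v t ≤ v s₀ := hvmono t s₀ htS.1.1 hts₀ hs₀mem.2
      calc |h (γ s₀) - h (γ 0)| ≤ |h (γ s₀) - h (γ t)| + |h (γ t) - h (γ 0)| :=
            abs_sub_le _ _ _
      _ ≤ η + (M + ε) * v t := by linarith
      _ ≤ (M + ε) * v s₀ + η := by nlinarith
    have hs₀1 : s₀ = 1 := by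
      by_contra hne1
      have hs₀lt : s₀ < 1 := lt_of_le_of_ne hs₀mem.2 hne1
      set p := γ s₀ with hp
      have hpK : p ∈ K := hγm hs₀mem
      obtain ⟨r, hr, hr'⟩ := Metric.tendsto_nhdsWithin_nhds.1 (hder p hpK) ε hε
      have hstep : ∀ z ∈ K, dist z p < r → |h z - h p| ≤ (M + ε) * ‖z - p‖ := by
        intro z hz hzr
        rcases eq_or_ne z p with rfl | hzp
        · simp
        · have hz' : z ∈ K \ {p} := ⟨hz, by simpa using hzp⟩
          have := hr' hz' hzr
          rw [Real.dist_eq, sub_zero] at this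
          have hnz : (0:ℝ) < ‖z - p‖ := by
            rw [norm_pos_iff, sub_ne_zero]; exact hzp
          have h1 : |h z - h p - (inner ℝ (dh p) (z - p) : ℝ)| ≤ ε * ‖z - p‖ := by
            have := le_of_lt this
            rw [abs_div, abs_of_pos hnz, div_le_iff₀ hnz] at this
            linarith [this]
          have h2 : |(inner ℝ (dh p) (z - p) : ℝ)| ≤ M * ‖z - p‖ := by
            calc |(inner ℝ (dh p) (z - p) : ℝ)| ≤ ‖dh p‖ * ‖z - p‖ := abs_real_inner_le_norm _ _
            _ ≤ M * ‖z - p‖ := by nlinarith [hM p hpK, norm_nonneg (z - p)]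
          have h3 : |h z - h p| ≤ |h z - h p - (inner ℝ (dh p) (z - p) : ℝ)|
              + |(inner ℝ (dh p) (z - p) : ℝ)| := by
            have := abs_add_le (h z - h p - (inner ℝ (dh p) (z - p) : ℝ)) ((inner ℝ (dh p) (z - p) : ℝ))
            simpa using this
          nlinarith
      obtain ⟨δ, hδ, hδ'⟩ := Metric.continuousWithinAt_iff.1 (hγc s₀ hs₀mem) r hr
      set t₁ := min 1 (s₀ + δ / 2) with ht₁
      have ht₁mem : t₁ ∈ Icc (0:ℝ) 1 := by
        constructor
        · exact le_min (by linarith) (by linarith [hs₀mem.1])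
        · exact min_le_left _ _
      have hs₀t₁ : s₀ < t₁ := lt_min hs₀lt (by linarith)
      have hdt₁ : dist t₁ s₀ < δ := by
        rw [Real.dist_eq, abs_of_nonneg (by linarith)]
        have : t₁ ≤ s₀ + δ / 2 := min_le_right _ _
        linarith
      have hγt₁ : dist (γ t₁) p < r := hδ' ht₁mem hdt₁
      have hK₁ : γ t₁ ∈ K := hγm ht₁mem
      have h1 : |h (γ t₁) - h p| ≤ (M + ε) * ‖γ t₁ - p‖ := hstep _ hK₁ hγt₁
      have h2 : ‖γ t₁ - p‖ ≤ v t₁ - v s₀ := hdistv s₀ t₁ hs₀mem.1 hs₀t₁.le ht₁mem.2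
      have ht₁S : t₁ ∈ S := by
        refine ⟨ht₁mem, ?_⟩
        calc |h (γ t₁) - h (γ 0)| ≤ |h (γ t₁) - h p| + |h p - h (γ 0)| := abs_sub_le _ _ _
        _ ≤ (M + ε) * (v t₁ - v s₀) + (M + ε) * v s₀ := by nlinarith [hs₀S.2]
        _ = (M + ε) * v t₁ := by ring
      exact absurd (le_csSup hbdd ht₁S) (not_le.2 hs₀t₁)
    have := hs₀S.2
    rw [hs₀1] at this
    calc |h (γ 1) - h (γ 0)| ≤ (M + ε) * v 1 := this
    _ ≤ (M + ε) * L := by nlinarith [hvL 1 le_rfl, hvmono 0 1 le_rfl zero_le_one le_rfl, hv0]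
  refine le_of_forall_pos_le_add fun ε hε => ?_
  have := main (ε / (L + 1)) (by positivity)
  have hLL : (ε / (L + 1)) * L ≤ ε := by
    rw [div_mul_eq_mul_div, div_le_iff₀ (by linarith)]
    nlinarith
  nlinarith

/-- If `K` is a pointwise Whitney regular compact set, then the jet space `J¹(K)` is
complete: if `df n` is a continuous derivative of `f n` on `K` for each `n`,
`f n → f` uniformly on `K` and `df n → g` uniformly on `K`, then `g` is a continuous
derivative of `f` on `K`. -/
theorem jet_space_complete_of_pointwiseWhitneyRegular {d : ℕ}
    (K : Set (EuclideanSpace ℝ (Fin d))) (hK : IsCompact K)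
    (hreg : PointwiseWhitneyRegular K)
    (f : ℕ → EuclideanSpace ℝ (Fin d) → ℝ)
    (df : ℕ → EuclideanSpace ℝ (Fin d) → EuclideanSpace ℝ (Fin d))
    (hder : ∀ n, ContinuousOn (df n) K ∧ IsDerivOn K (f n) (df n))
    (flim : EuclideanSpace ℝ (Fin d) → ℝ)
    (glim : EuclideanSpace ℝ (Fin d) → EuclideanSpace ℝ (Fin d))
    (hfu : TendstoUniformlyOn f flim Filter.atTop K)
    (hgu : TendstoUniformlyOn df glim Filter.atTop K) :
    ContinuousOn glim K ∧ IsDerivOn K flim glim := by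
  refine ⟨hgu.continuousOn (Frequently.of_forall fun n => (hder n).1), ?_⟩
  intro x hx
  rw [NormedAddCommGroup.tendsto_nhds_zero]
  intro ε hε
  obtain ⟨C, hC, V, hV, hjoin⟩ := hreg x hx
  set ε' := ε / (2 * C + 4) with hε'def
  have hε' : 0 < ε' := div_pos hε (by linarith)
  obtain ⟨N, hN⟩ : ∃ N, ∀ n ≥ N, ∀ p ∈ K, dist (glim p) (df n p) < ε' :=
    eventually_atTop.1 ((Metric.tendstoUniformlyOn_iff.1 hgu) ε' hε')
  set E : ℕ → EuclideanSpace ℝ (Fin d) → ℝ :=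
    fun n y => f n y - f n x - (inner ℝ (df n x) (y - x) : ℝ) with hE
  have key : ∀ y ∈ V ∩ K, ∀ n ≥ N, |E n y - E N y| ≤ 2 * ε' * (C + 1) * ‖y - x‖ := by
    intro y hy n hn
    obtain ⟨γ, hγc, hγm, hγ0, hγ1, hγvar⟩ := hjoin y hy
    have hderiv : IsDerivOn K (fun p => f n p - f N p) (fun p => df n p - df N p) :=
      (hder n).2.sub' (hder N).2
    have hM : ∀ p ∈ K, ‖df n p - df N p‖ ≤ 2 * ε' := by
      intro p hp
      have h1 := hN n hn p hp
      have h2 := hN N le_rfl p hp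
      calc ‖df n p - df N p‖ = dist (df n p) (df N p) := (dist_eq_norm _ _).symm
      _ ≤ dist (df n p) (glim p) + dist (glim p) (df N p) := dist_triangle _ _ _
      _ ≤ 2 * ε' := by rw [dist_comm (df n p)]; linarith
    have hpb := path_bound hderiv hM hγc hγm
      (mul_nonneg hC.le (norm_nonneg _)) hγvar
    rw [hγ0, hγ1] at hpb
    have hinner : |(inner ℝ (df n x - df N x) (y - x) : ℝ)| ≤ 2 * ε' * ‖y - x‖ := by
      calc |(inner ℝ (df n x - df N x) (y - x) : ℝ)| ≤ ‖df n x - df N x‖ * ‖y - x‖ :=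
            abs_real_inner_le_norm _ _
      _ ≤ 2 * ε' * ‖y - x‖ := by nlinarith [hM x hx, norm_nonneg (y - x)]
    have heq : E n y - E N y = (f n y - f N y - (f n x - f N x))
        - (inner ℝ (df n x - df N x) (y - x) : ℝ) := by
      rw [hE]; simp only [inner_sub_left]; ring
    have habs : |E n y - E N y| ≤ |f n y - f N y - (f n x - f N x)|
        + |(inner ℝ (df n x - df N x) (y - x) : ℝ)| := by
      rw [heq]; exact abs_sub _ _
    have hnrev : ‖x - y‖ = ‖y - x‖ := norm_sub_rev _ _
    calc |E n y - E N y| ≤ |f n y - f N y - (f n x - f N x)|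
          + |(inner ℝ (df n x - df N x) (y - x) : ℝ)| := habs
    _ ≤ 2 * ε' * (C * ‖x - y‖) + 2 * ε' * ‖y - x‖ := by
        refine add_le_add ?_ hinner
        simpa using hpb
    _ = 2 * ε' * (C + 1) * ‖y - x‖ := by rw [hnrev]; ring
  have key2 : ∀ y ∈ V ∩ K,
      |(flim y - flim x - (inner ℝ (glim x) (y - x) : ℝ)) - E N y|
        ≤ 2 * ε' * (C + 1) * ‖y - x‖ := by
    intro y hy
    have limf : Tendsto (fun n => E n y) atTop
        (𝓝 (flim y - flim x - (inner ℝ (glim x) (y - x) : ℝ))) := by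
      refine Tendsto.sub (Tendsto.sub (hfu.tendsto_at hy.2) (hfu.tendsto_at hx)) ?_
      exact Tendsto.inner (𝕜 := ℝ) (hgu.tendsto_at hx) tendsto_const_nhds
    have limabs : Tendsto (fun n => |E n y - E N y|) atTop
        (𝓝 (|(flim y - flim x - (inner ℝ (glim x) (y - x) : ℝ)) - E N y|)) :=
      ((limf.sub tendsto_const_nhds).abs)
    exact le_of_tendsto limabs (eventually_atTop.2 ⟨N, fun n hn => key y hy n hn⟩)
  have hENlim := (NormedAddCommGroup.tendsto_nhds_zero.1 ((hder N).2 x hx)) ε' hε'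
  have hVev : ∀ᶠ y in 𝓝[K \ {x}] x, y ∈ V :=
    eventually_nhdsWithin_of_eventually_nhds (eventually_of_mem hV fun y hy => hy)
  filter_upwards [hVev, hENlim, self_mem_nhdsWithin] with y hyV hyEN hyK
  have hyne : y ≠ x := fun h' => hyK.2 (by simp [h'])
  have hr : (0:ℝ) < ‖y - x‖ := by rw [norm_pos_iff, sub_ne_zero]; exact hyne
  have hk2 := key2 y ⟨hyV, hyK.1⟩
  have hEN' : |E N y| < ε' * ‖y - x‖ := by
    rw [Real.norm_eq_abs, abs_div, abs_of_pos hr, div_lt_iff₀ hr] at hyEN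
    exact hyEN
  have htotal : |flim y - flim x - (inner ℝ (glim x) (y - x) : ℝ)|
      < (2 * ε' * (C + 1) + ε') * ‖y - x‖ := by
    have := abs_add_le ((flim y - flim x - (inner ℝ (glim x) (y - x) : ℝ)) - E N y) (E N y)
    simp only [sub_add_cancel] at this
    nlinarith
  rw [Real.norm_eq_abs, abs_div, abs_of_pos hr, div_lt_iff₀ hr]
  refine htotal.trans_le ?_
  have hfinal : 2 * ε' * (C + 1) + ε' ≤ ε := by
    have : ε' * (2 * C + 4) = ε := by
      rw [hε'def, div_mul_cancel₀]; linarith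
    nlinarith
  nlinarith
end
end

section
/- Let K ⊆ ℝ^d be a compact set. Suppose that for every x ∈ K there exists C_x > 0 such that for all f ∈ C¹(K) and all y ∈ K with y ≠ x one has |f(y) − f(x)|/|y − x| ≤ C_x ‖f‖_{C¹(K)}. Then: if (f_n) and (df_n) are sequences with each df_n a continuous derivative of f_n on K, f_n → f uniformly on K and df_n → g uniformly on K, then g is a continuous derivative of f on K (i.e., the jet space J¹(K) with norm ‖f‖_K + ‖df‖_K is complete). -/
open Set Filter Topology MeasureTheory
open scoped NNReal ENNReal

noncomputable section

/-- Sup norm of a function on `K`. -/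
def supNormOn {d : ℕ} {α : Type*} [Norm α] (K : Set (EuclideanSpace ℝ (Fin d)))
    (g : EuclideanSpace ℝ (Fin d) → α) : ℝ :=
  sSup ((fun z => ‖g z‖) '' K)

/-- `f ∈ C¹(K)`: `f` admits a continuous derivative on `K`. -/
def MemC1 {d : ℕ} (K : Set (EuclideanSpace ℝ (Fin d)))
    (f : EuclideanSpace ℝ (Fin d) → ℝ) : Prop :=
  ∃ df, ContinuousOn df K ∧ IsDerivOn K f df

/-- The quotient norm `‖f‖_{C¹(K)} = ‖f‖_K + inf {‖df‖_K : df a continuous derivative of f}`. -/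
def c1Norm {d : ℕ} (K : Set (EuclideanSpace ℝ (Fin d)))
    (f : EuclideanSpace ℝ (Fin d) → ℝ) : ℝ :=
  supNormOn K f +
    sInf {r | ∃ df, ContinuousOn df K ∧ IsDerivOn K f df ∧ r = supNormOn K df}

lemma supNormOn_nonneg {d : ℕ} {α : Type*} [SeminormedAddGroup α] (K : Set (EuclideanSpace ℝ (Fin d)))
    (g : EuclideanSpace ℝ (Fin d) → α) : 0 ≤ supNormOn K g :=
  Real.sSup_nonneg fun r hr => by
    obtain ⟨z, hz, hzr⟩ := hr
    rw [← hzr]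
    exact norm_nonneg _

lemma supNormOn_le {d : ℕ} {α : Type*} [SeminormedAddGroup α] {K : Set (EuclideanSpace ℝ (Fin d))}
    {g : EuclideanSpace ℝ (Fin d) → α} {M : ℝ} (hM : 0 ≤ M)
    (h : ∀ z ∈ K, ‖g z‖ ≤ M) : supNormOn K g ≤ M :=
  Real.sSup_le (by rintro _ ⟨z, hz, rfl⟩; exact h z hz) hM

lemma isDerivOn_sub {d : ℕ} {K : Set (EuclideanSpace ℝ (Fin d))}
    {f g : EuclideanSpace ℝ (Fin d) → ℝ}
    {df dg : EuclideanSpace ℝ (Fin d) → EuclideanSpace ℝ (Fin d)}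
    (hf : IsDerivOn K f df) (hg : IsDerivOn K g dg) :
    IsDerivOn K (fun z => f z - g z) (fun z => df z - dg z) := by
  intro x hx
  have h : Tendsto (fun y => (f y - f x - (inner ℝ (df x) (y - x) : ℝ)) / ‖y - x‖
      - (g y - g x - (inner ℝ (dg x) (y - x) : ℝ)) / ‖y - x‖) (𝓝[K \ {x}] x) (𝓝 0) := by
    simpa using (hf x hx).sub (hg x hx)
  refine h.congr fun y => ?_
  rw [div_sub_div_same]
  congr 1
  rw [inner_sub_left]
  ring

lemma c1Norm_le {d : ℕ} {K : Set (EuclideanSpace ℝ (Fin d))}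
    {h : EuclideanSpace ℝ (Fin d) → ℝ} {dh : EuclideanSpace ℝ (Fin d) → EuclideanSpace ℝ (Fin d)}
    (hc : ContinuousOn dh K) (hd : IsDerivOn K h dh) :
    c1Norm K h ≤ supNormOn K h + supNormOn K dh := by
  have hbb : BddBelow {r | ∃ df, ContinuousOn df K ∧ IsDerivOn K h df ∧ r = supNormOn K df} :=
    ⟨0, by rintro r ⟨df', _, _, rfl⟩; exact supNormOn_nonneg _ _⟩
  exact add_le_add_right (csInf_le hbb ⟨dh, hc, hd, rfl⟩) _

/-- If for every `x ∈ K` there is `C_x > 0` with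
`|f y - f x| / ‖y - x‖ ≤ C_x ‖f‖_{C¹(K)}` for all `f ∈ C¹(K)` and `y ∈ K, y ≠ x`,
then the jet space `J¹(K)` is complete: uniform limits of jets are jets. -/
theorem jet_space_complete_of_pointwise_bound {d : ℕ}
    (K : Set (EuclideanSpace ℝ (Fin d))) (hK : IsCompact K)
    (hbd : ∀ x ∈ K, ∃ C > (0:ℝ), ∀ f : EuclideanSpace ℝ (Fin d) → ℝ,
      MemC1 K f → ∀ y ∈ K, y ≠ x → |f y - f x| ≤ C * c1Norm K f * ‖y - x‖)
    (f : ℕ → EuclideanSpace ℝ (Fin d) → ℝ)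
    (df : ℕ → EuclideanSpace ℝ (Fin d) → EuclideanSpace ℝ (Fin d))
    (hder : ∀ n, ContinuousOn (df n) K ∧ IsDerivOn K (f n) (df n))
    (flim : EuclideanSpace ℝ (Fin d) → ℝ)
    (glim : EuclideanSpace ℝ (Fin d) → EuclideanSpace ℝ (Fin d))
    (hfu : TendstoUniformlyOn f flim Filter.atTop K)
    (hgu : TendstoUniformlyOn df glim Filter.atTop K) :
    ContinuousOn glim K ∧ IsDerivOn K flim glim := by
  have hglim : ContinuousOn glim K :=
    hgu.continuousOn (Eventually.of_forall fun n => (hder n).1).frequently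
  refine ⟨hglim, ?_⟩
  intro x hx
  obtain ⟨C, hC, hCb⟩ := hbd x hx
  rw [NormedAddCommGroup.tendsto_nhds_zero]
  intro ε hε
  set ε' := ε / (2 * C + 3) with hε'def
  have hε' : 0 < ε' := by positivity
  obtain ⟨N1, hN1⟩ := eventually_atTop.mp
    (Metric.tendstoUniformlyOn_iff.mp hfu (ε' / 2) (by positivity))
  obtain ⟨N2, hN2⟩ := eventually_atTop.mp
    (Metric.tendstoUniformlyOn_iff.mp hgu (ε' / 2) (by positivity))
  set n := max N1 N2 with hn
  -- bound on c1Norm of differences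
  have hc1 : ∀ m, N1 ≤ m → N2 ≤ m → c1Norm K (fun z => f m z - f n z) ≤ 2 * ε' := by
    intro m hm1 hm2
    have h1 : supNormOn K (fun z => f m z - f n z) ≤ ε' := by
      refine supNormOn_le hε'.le fun z hz => ?_
      have a1 := hN1 m hm1 z hz
      have a2 := hN1 n (le_max_left _ _) z hz
      rw [Real.dist_eq] at a1 a2
      have heq : f m z - f n z = -(flim z - f m z) + (flim z - f n z) := by ring
      calc ‖f m z - f n z‖ = |(-(flim z - f m z)) + (flim z - f n z)| := by rw [Real.norm_eq_abs, heq]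
        _ ≤ |(-(flim z - f m z))| + |flim z - f n z| := abs_add_le _ _
        _ = |flim z - f m z| + |flim z - f n z| := by rw [abs_neg]
        _ ≤ ε' / 2 + ε' / 2 := add_le_add a1.le a2.le
        _ = ε' := by ring
    have h2 : supNormOn K (fun z => df m z - df n z) ≤ ε' := by
      refine supNormOn_le hε'.le fun z hz => ?_
      have a1 := hN2 m hm2 z hz
      have a2 := hN2 n (le_max_right _ _) z hz
      calc ‖df m z - df n z‖ ≤ ‖df m z - glim z‖ + ‖glim z - df n z‖ := norm_sub_le_norm_sub_add_norm_sub _ _ _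
        _ ≤ ε' / 2 + ε' / 2 := by
            refine add_le_add ?_ ?_
            · rw [← dist_eq_norm, dist_comm]; exact a1.le
            · rw [← dist_eq_norm]; exact a2.le
        _ = ε' := by ring
    calc c1Norm K (fun z => f m z - f n z)
        ≤ supNormOn K (fun z => f m z - f n z) + supNormOn K (fun z => df m z - df n z) :=
          c1Norm_le ((hder m).1.sub (hder n).1) (isDerivOn_sub (hder m).2 (hder n).2)
      _ ≤ ε' + ε' := add_le_add h1 h2
      _ = 2 * ε' := by ring
  -- first term bound
  have claim1 : ∀ y ∈ K, y ≠ x →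
      |flim y - flim x - (f n y - f n x)| ≤ C * (2 * ε') * ‖y - x‖ := by
    intro y hy hyx
    have hten : Tendsto (fun m => |f m y - f n y - (f m x - f n x)|) atTop
        (𝓝 |flim y - f n y - (flim x - f n x)|) :=
      (((hfu.tendsto_at hy).sub tendsto_const_nhds).sub
        ((hfu.tendsto_at hx).sub tendsto_const_nhds)).abs
    have hb : ∀ᶠ m in atTop, |f m y - f n y - (f m x - f n x)| ≤ C * (2 * ε') * ‖y - x‖ := by
      filter_upwards [eventually_ge_atTop N1, eventually_ge_atTop N2] with m hm1 hm2
      have hmem : MemC1 K (fun z => f m z - f n z) :=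
        ⟨fun z => df m z - df n z, (hder m).1.sub (hder n).1,
          isDerivOn_sub (hder m).2 (hder n).2⟩
      have := hCb (fun z => f m z - f n z) hmem y hy hyx
      calc |f m y - f n y - (f m x - f n x)|
          ≤ C * c1Norm K (fun z => f m z - f n z) * ‖y - x‖ := by
            simpa using this
        _ ≤ C * (2 * ε') * ‖y - x‖ := by
            refine mul_le_mul_of_nonneg_right ?_ (norm_nonneg _)
            exact mul_le_mul_of_nonneg_left (hc1 m hm1 hm2) hC.le
    have hlim := le_of_tendsto hten hb
    have heq : flim y - flim x - (f n y - f n x) = flim y - f n y - (flim x - f n x) := by ring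
    rw [heq]
    exact hlim
  -- second term eventual bound
  have h2ev : ∀ᶠ y in 𝓝[K \ {x}] x,
      dist ((f n y - f n x - (inner ℝ (df n x) (y - x) : ℝ)) / ‖y - x‖) 0 < ε' :=
    Metric.tendsto_nhds.mp ((hder n).2 x hx) ε' hε'
  -- third term bound
  have h3 : ‖df n x - glim x‖ ≤ ε' := by
    have := hN2 n (le_max_right _ _) x hx
    rw [dist_comm, dist_eq_norm] at this
    exact this.le.trans (by linarith)
  filter_upwards [h2ev, eventually_mem_nhdsWithin] with y h2 hymem
  obtain ⟨hyK, hyx'⟩ := hymem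
  have hyx : y ≠ x := by simpa using hyx'
  have hnpos : 0 < ‖y - x‖ := by
    rw [norm_pos_iff]; exact sub_ne_zero.mpr hyx
  rw [Real.dist_eq, sub_zero, abs_div, abs_of_nonneg (norm_nonneg _), div_lt_iff₀ hnpos] at h2
  have key : |flim y - flim x - (inner ℝ (glim x) (y - x) : ℝ)| ≤ (2 * C + 2) * ε' * ‖y - x‖ := by
    have e1 := claim1 y hyK hyx
    have e3 : |(inner ℝ (df n x - glim x) (y - x) : ℝ)| ≤ ε' * ‖y - x‖ := by
      calc |(inner ℝ (df n x - glim x) (y - x) : ℝ)| ≤ ‖df n x - glim x‖ * ‖y - x‖ :=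
            abs_real_inner_le_norm _ _
        _ ≤ ε' * ‖y - x‖ := mul_le_mul_of_nonneg_right h3 (norm_nonneg _)
    have hsplit : flim y - flim x - (inner ℝ (glim x) (y - x) : ℝ) =
        (flim y - flim x - (f n y - f n x)) +
        (f n y - f n x - (inner ℝ (df n x) (y - x) : ℝ)) +
        (inner ℝ (df n x - glim x) (y - x) : ℝ) := by
      rw [inner_sub_left]; ring
    rw [hsplit]
    calc |_ + _ + _| ≤ |flim y - flim x - (f n y - f n x)| +
          |f n y - f n x - (inner ℝ (df n x) (y - x) : ℝ)| +
          |(inner ℝ (df n x - glim x) (y - x) : ℝ)| := abs_add_three _ _ _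
      _ ≤ C * (2 * ε') * ‖y - x‖ + ε' * ‖y - x‖ + ε' * ‖y - x‖ :=
          add_le_add (add_le_add e1 h2.le) e3
      _ = (2 * C + 2) * ε' * ‖y - x‖ := by ring
  have : ‖(flim y - flim x - (inner ℝ (glim x) (y - x) : ℝ)) / ‖y - x‖‖ ≤ (2 * C + 2) * ε' := by
    rw [Real.norm_eq_abs, abs_div, abs_of_nonneg (norm_nonneg _), div_le_iff₀ hnpos]
    exact key
  refine this.trans_lt ?_
  have heq : (2 * C + 3) * ε' = ε := by
    rw [hε'def]; field_simp
  nlinarith [hε']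
end
end
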